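/- Let a_1,...,a_n be positive integers, M a common multiple of the a_i, d_i = M/a_i, and b a nonnegative integer. Then the number of nonnegative integer solutions of a_1 x_1 + ... + a_n x_n = b equals the sum over all tuples (t_1,...,t_n) with 0 ≤ t_i ≤ d_i − 1 of P*(f(t_1,...,t_n)), where f(t_1,...,t_n) = (b − a_1 t_1 − ... − a_n t_n)/M and P*(m) denotes the number of nonnegative integer solutions of x_1 + ... + x_n = m when m is a nonnegative integer divisible appropriately (and 0 when b − ∑ a_i t_i is negative or not divisible by M). -/
import Mathlib

private lemma nat_card_sigma' {ι : Type*} [Fintype ι] {f : ι → Type*} [∀ i, Finite (f i)] :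
    Nat.card (Σ i, f i) = ∑ i, Nat.card (f i) := by
  haveI : ∀ i, Fintype (f i) := fun i => Fintype.ofFinite _
  simp [Nat.card_eq_fintype_card]

private lemma finite_sum_fiber (n s M b : ℕ) (hM : 0 < M) :
    Finite {y : Fin n → ℕ // s + M * ∑ i, y i = b} := by
  have hbd : ∀ (y : {y : Fin n → ℕ // s + M * ∑ i, y i = b}) (i : Fin n), y.1 i < b + 1 := by
    intro y i
    have h1 : y.1 i ≤ ∑ j, y.1 j :=
      Finset.single_le_sum (fun j _ => Nat.zero_le _) (Finset.mem_univ i)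
    have h3 : ∑ j, y.1 j ≤ M * ∑ j, y.1 j := Nat.le_mul_of_pos_left _ hM
    have h2 := y.2
    omega
  apply Finite.of_injective (fun (y : {y : Fin n → ℕ // s + M * ∑ i, y i = b}) =>
    ((fun i => (⟨y.1 i, hbd y i⟩ : Fin (b+1))) : Fin n → Fin (b+1)))
  intro y z h
  ext i
  have := congrFun h i
  simpa [Fin.ext_iff] using this

theorem stmt1 (n : ℕ) (a : Fin n → ℕ) (ha : ∀ i, 0 < a i) (M : ℕ) (hM : 0 < M)
    (hdvd : ∀ i, a i ∣ M) (b : ℕ) :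
    Nat.card {x : Fin n → ℕ // ∑ i, a i * x i = b} =
      ∑ t : (i : Fin n) → Fin (M / a i),
        if (∑ i, a i * (t i : ℕ)) ≤ b ∧ M ∣ (b - ∑ i, a i * (t i : ℕ)) then
          Nat.card {x : Fin n → ℕ // ∑ i, x i = (b - ∑ i, a i * (t i : ℕ)) / M}
        else 0 := by
  set d := fun i => M / a i with hd
  have hdpos : ∀ i, 0 < d i := fun i => Nat.div_pos (Nat.le_of_dvd hM (hdvd i)) (ha i)
  have had : ∀ i, a i * d i = M := fun i => Nat.mul_div_cancel' (hdvd i) -- a i * (M / a i)?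
  -- key decomposition sum
  have key : ∀ x : Fin n → ℕ, ∑ i, a i * x i
      = (∑ i, a i * (x i % d i)) + M * ∑ i, x i / d i := by
    intro x
    rw [Finset.mul_sum, ← Finset.sum_add_distrib]
    refine Finset.sum_congr rfl fun i _ => ?_
    conv_lhs => rw [← Nat.mod_add_div (x i) (d i)]
    rw [Nat.mul_add, ← had i]
    ring
  have e : {x : Fin n → ℕ // ∑ i, a i * x i = b} ≃
      Σ t : (i : Fin n) → Fin (d i),
        {y : Fin n → ℕ // (∑ i, a i * (t i : ℕ)) + M * ∑ i, y i = b} :=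
    { toFun := fun x => ⟨fun i => ⟨x.1 i % d i, Nat.mod_lt _ (hdpos i)⟩,
        fun i => x.1 i / d i, by rw [← key]; exact x.2⟩
      invFun := fun p => ⟨fun i => (p.1 i : ℕ) + d i * p.2.1 i, by
        rw [key]
        have h1 : ∀ i, ((p.1 i : ℕ) + d i * p.2.1 i) % d i = (p.1 i : ℕ) := by
          intro i
          rw [Nat.add_mul_mod_self_left, Nat.mod_eq_of_lt (p.1 i).2]
        have h2 : ∀ i, ((p.1 i : ℕ) + d i * p.2.1 i) / d i = p.2.1 i := by
          intro i
          rw [Nat.add_mul_div_left _ _ (hdpos i), Nat.div_eq_of_lt (p.1 i).2, Nat.zero_add]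
        simp only [h1, h2]
        exact p.2.2⟩
      left_inv := fun x => by
        ext i
        exact Nat.mod_add_div (x.1 i) (d i)
      right_inv := fun p => by
        have h1 : ∀ i, ((p.1 i : ℕ) + d i * p.2.1 i) % d i = (p.1 i : ℕ) := fun i => by
          rw [Nat.add_mul_mod_self_left, Nat.mod_eq_of_lt (p.1 i).2]
        have h2 : ∀ i, ((p.1 i : ℕ) + d i * p.2.1 i) / d i = p.2.1 i := fun i => by
          rw [Nat.add_mul_div_left _ _ (hdpos i), Nat.div_eq_of_lt (p.1 i).2, Nat.zero_add]
        refine Sigma.ext (funext fun i => Fin.ext ?_) ((Subtype.heq_iff_coe_eq ?_).mpr ?_)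
        · dsimp only; exact h1 i
        · intro y0; dsimp only; simp only [h1]
        · dsimp only; funext i; exact h2 i }
  rw [Nat.card_congr e]
  haveI : ∀ t : (i : Fin n) → Fin (d i),
      Finite {y : Fin n → ℕ // (∑ i, a i * (t i : ℕ)) + M * ∑ i, y i = b} :=
    fun t => finite_sum_fiber n _ M b hM
  rw [nat_card_sigma']
  refine Finset.sum_congr rfl fun t _ => ?_
  set s := ∑ i, a i * (t i : ℕ) with hs
  by_cases hc : s ≤ b ∧ M ∣ (b - s)
  · rw [if_pos hc]
    obtain ⟨hle, k, hk⟩ := hc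
    have hb : b = s + M * k := by omega
    have hkval : (b - s) / M = k := by rw [hk]; exact Nat.mul_div_cancel_left _ hM
    rw [hkval]
    refine Nat.card_congr (Equiv.subtypeEquivRight fun y => ?_)
    constructor
    · intro h
      have h2 : M * ∑ i, y i = M * k := by omega
      exact Nat.eq_of_mul_eq_mul_left hM h2
    · intro h
      rw [h]; omega
  · rw [if_neg hc]
    have : IsEmpty {y : Fin n → ℕ // s + M * ∑ i, y i = b} := by
      constructor
      rintro ⟨y, hy⟩
      exact hc ⟨by omega, ⟨∑ i, y i, by omega⟩⟩
    exact Nat.card_of_isEmpty
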